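/- arXiv:2511.19010 — 2 statements merged into one kernel-verified Lean document; each statement's English description precedes it below -/
import Mathlib

section
/- If a is a neutral element of a lattice L and x is a modular element of L, then x ⊔ a is a modular element of L. -/
/-- If `a` is a neutral element and `x` is a modular element of a lattice,
then `x ⊔ a` is a modular element. -/
theorem sup_neutral_modular {L : Type*} [Lattice L] (a x : L)
    (ha : ∀ y z : L, (a ⊔ y) ⊓ (y ⊔ z) ⊓ (z ⊔ a) = (a ⊓ y) ⊔ (y ⊓ z) ⊔ (z ⊓ a))
    (hx : ∀ y z : L, y ≤ z → (x ⊔ y) ⊓ z = (x ⊓ z) ⊔ y) :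
    ∀ y z : L, y ≤ z → ((x ⊔ a) ⊔ y) ⊓ z = ((x ⊔ a) ⊓ z) ⊔ y := by
  -- a is modular
  have hamod : ∀ y z : L, y ≤ z → (a ⊔ y) ⊓ z = (a ⊓ z) ⊔ y := by
    intro y z h
    have h1 := ha y z
    rw [sup_eq_right.mpr h, inf_eq_left.mpr h] at h1
    calc (a ⊔ y) ⊓ z = (a ⊔ y) ⊓ z ⊓ (z ⊔ a) := by
          rw [inf_eq_left.mpr (inf_le_right.trans le_sup_left)]
      _ = a ⊓ y ⊔ y ⊔ z ⊓ a := h1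
      _ = (a ⊓ z) ⊔ y := by
          apply le_antisymm
          · exact sup_le (sup_le (le_sup_of_le_right inf_le_right) le_sup_right)
              (le_sup_of_le_left (le_inf inf_le_right inf_le_left))
          · exact sup_le (le_sup_of_le_right (le_inf inf_le_right inf_le_left))
              (le_sup_of_le_left le_sup_right)
  -- a is dually modular
  have hdm : ∀ s t : L, a ≤ t → (a ⊔ s) ⊓ t = a ⊔ (s ⊓ t) := by
    intro s t h
    have h1 := ha s t
    rw [sup_eq_left.mpr h, inf_eq_right.mpr h] at h1
    calc (a ⊔ s) ⊓ t = (a ⊔ s) ⊓ ((s ⊔ t) ⊓ t) := by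
          rw [inf_eq_right.mpr (le_sup_right : t ≤ s ⊔ t)]
      _ = (a ⊔ s) ⊓ (s ⊔ t) ⊓ t := by rw [inf_assoc]
      _ = a ⊓ s ⊔ s ⊓ t ⊔ a := h1
      _ = a ⊔ (s ⊓ t) := by
          apply le_antisymm
          · exact sup_le (sup_le (le_sup_of_le_left inf_le_left) le_sup_right)
              le_sup_left
          · exact sup_le le_sup_right (le_sup_of_le_left le_sup_right)
  -- a is dually distributive
  have hdd : ∀ p q : L, a ⊔ (p ⊓ q) = (a ⊔ p) ⊓ (a ⊔ q) := by
    intro p q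
    have h1 := ha p q
    have ht : (a ⊔ p) ⊓ (a ⊔ q) ≤ a ⊔ (p ⊔ q) :=
      inf_le_left.trans (sup_le_sup_left le_sup_left a)
    have hA : (a ⊔ p) ⊓ (p ⊔ q) ⊓ (q ⊔ a) = (p ⊔ q) ⊓ ((a ⊔ p) ⊓ (a ⊔ q)) := by
      apply le_antisymm
      · exact le_inf (inf_le_left.trans inf_le_right)
          (le_inf (inf_le_left.trans inf_le_left)
            (inf_le_right.trans (le_of_eq (sup_comm q a))))
      · exact le_inf (le_inf (inf_le_right.trans inf_le_left) inf_le_left)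
          (inf_le_right.trans (inf_le_right.trans (le_of_eq (sup_comm a q))))
    have hC : a ⊔ (a ⊓ p ⊔ p ⊓ q ⊔ q ⊓ a) = a ⊔ p ⊓ q := by
      apply le_antisymm
      · exact sup_le le_sup_left (sup_le (sup_le (le_sup_of_le_left inf_le_left)
          le_sup_right) (le_sup_of_le_left inf_le_right))
      · exact sup_le le_sup_left (le_sup_of_le_right (le_sup_of_le_left le_sup_right))
    calc a ⊔ p ⊓ q = a ⊔ (a ⊓ p ⊔ p ⊓ q ⊔ q ⊓ a) := hC.symm
      _ = a ⊔ ((a ⊔ p) ⊓ (p ⊔ q) ⊓ (q ⊔ a)) := by rw [h1]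
      _ = a ⊔ ((p ⊔ q) ⊓ ((a ⊔ p) ⊓ (a ⊔ q))) := by rw [hA]
      _ = (a ⊔ (p ⊔ q)) ⊓ ((a ⊔ p) ⊓ (a ⊔ q)) :=
          (hdm (p ⊔ q) _ (le_inf le_sup_left le_sup_left)).symm
      _ = (a ⊔ p) ⊓ (a ⊔ q) := inf_eq_right.mpr ht
  intro y z h
  have key : ∀ u : L, (a ⊔ u) ⊓ z = (a ⊓ z) ⊔ (u ⊓ z) := by
    intro u
    calc (a ⊔ u) ⊓ z = (a ⊔ u) ⊓ ((a ⊔ z) ⊓ z) := by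
          rw [inf_eq_right.mpr (le_sup_right : z ≤ a ⊔ z)]
      _ = (a ⊔ u) ⊓ (a ⊔ z) ⊓ z := by rw [inf_assoc]
      _ = (a ⊔ (u ⊓ z)) ⊓ z := by rw [← hdd u z]
      _ = (a ⊓ z) ⊔ (u ⊓ z) := hamod _ _ inf_le_right
  calc ((x ⊔ a) ⊔ y) ⊓ z = (a ⊔ (x ⊔ y)) ⊓ z := by
        rw [sup_comm x a, sup_assoc]
    _ = (a ⊓ z) ⊔ ((x ⊔ y) ⊓ z) := key _
    _ = (a ⊓ z) ⊔ ((x ⊓ z) ⊔ y) := by rw [hx y z h]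
    _ = ((a ⊓ z) ⊔ (x ⊓ z)) ⊔ y := by rw [sup_assoc]
    _ = ((x ⊔ a) ⊓ z) ⊔ y := by rw [sup_comm x a, key x]
end

section
/- For n ≥ 5, if H is a nontrivial subgroup of Sₙ that is a modular element of the subgroup lattice Sub(Sₙ), then H ⊇ Aₙ (i.e., H = Aₙ or H = Sₙ). -/
open Equiv Equiv.Perm Subgroup
set_option linter.unusedSectionVars false
set_option linter.unusedVariables false

section Foundations
variable {α : Type*} [DecidableEq α]

/-- the 3-cycle a ↦ b ↦ c ↦ a -/
def c3 (a b c : α) : Perm α := swap a b * swap b c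

lemma c3_a {a b c : α} (hab : a ≠ b) (hac : a ≠ c) : c3 a b c a = b := by
  simp only [c3, mul_apply]
  rw [swap_apply_of_ne_of_ne hab hac, swap_apply_left]

lemma c3_b {a b c : α} (hac : a ≠ c) (hbc : b ≠ c) : c3 a b c b = c := by
  simp only [c3, mul_apply]
  rw [swap_apply_left, swap_apply_of_ne_of_ne hac.symm hbc.symm]

lemma c3_c {a b c : α} (hbc : b ≠ c) : c3 a b c c = a := by
  simp only [c3, mul_apply]
  rw [swap_apply_right, swap_apply_right]

lemma c3_other {a b c t : α} (ha : t ≠ a) (hb : t ≠ b) (hc : t ≠ c) : c3 a b c t = t := by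
  simp only [c3, mul_apply]
  rw [swap_apply_of_ne_of_ne hb hc, swap_apply_of_ne_of_ne ha hb]

lemma c3_rot {a b c : α} (hab : a ≠ b) (hac : a ≠ c) (hbc : b ≠ c) :
    c3 a b c = c3 b c a := by
  have g1 := hab.symm; have g2 := hac.symm; have g3 := hbc.symm
  apply Equiv.ext; intro t
  rcases eq_or_ne t a with rfl|ha
  · simp_all [c3, mul_apply, swap_apply_def]
  rcases eq_or_ne t b with rfl|hb
  · simp_all [c3, mul_apply, swap_apply_def]
  rcases eq_or_ne t c with rfl|hc
  · simp_all [c3, mul_apply, swap_apply_def]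
  · simp_all [c3, mul_apply, swap_apply_def]

lemma c3_inv {a b c : α} (hab : a ≠ b) (hac : a ≠ c) (hbc : b ≠ c) :
    (c3 a b c)⁻¹ = c3 a c b := by
  have g1 := hab.symm; have g2 := hac.symm; have g3 := hbc.symm
  rw [c3, mul_inv_rev, swap_inv, swap_inv]
  apply Equiv.ext; intro t
  rcases eq_or_ne t a with rfl|ha
  · simp_all [c3, mul_apply, swap_apply_def]
  rcases eq_or_ne t b with rfl|hb
  · simp_all [c3, mul_apply, swap_apply_def]
  rcases eq_or_ne t c with rfl|hc
  · simp_all [c3, mul_apply, swap_apply_def]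
  · simp_all [c3, mul_apply, swap_apply_def]

lemma c3_ne_one {a b c : α} (hab : a ≠ b) (hac : a ≠ c) : c3 a b c ≠ 1 := by
  intro h
  have := c3_a hab hac
  rw [h] at this
  exact hab (by simpa using this)

/-- conjugation of a swap -/
lemma conj_swap (x : Perm α) (u v : α) : x * swap u v * x⁻¹ = swap (x u) (x v) :=
  (swap_apply_apply x u v).symm

/-- conjugation of c3 -/
lemma conj_c3 (x : Perm α) (a b c : α) :
    x * c3 a b c * x⁻¹ = c3 (x a) (x b) (x c) := by
  rw [c3, c3, ← conj_swap x a b, ← conj_swap x b c]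
  group

lemma swap_mul_swap_left {a b c : α} (hab : a ≠ b) (hac : a ≠ c) (hbc : b ≠ c) :
    swap a b * swap a c = c3 a c b := by
  have g1 := hab.symm; have g2 := hac.symm; have g3 := hbc.symm
  apply Equiv.ext; intro t
  rcases eq_or_ne t a with rfl|ha
  · simp_all [c3, mul_apply, swap_apply_def]
  rcases eq_or_ne t b with rfl|hb
  · simp_all [c3, mul_apply, swap_apply_def]
  rcases eq_or_ne t c with rfl|hc
  · simp_all [c3, mul_apply, swap_apply_def]
  · simp_all [c3, mul_apply, swap_apply_def]

lemma swap_mul_swap_right {a b c : α} (hab : a ≠ b) (hac : a ≠ c) (hbc : b ≠ c) :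
    swap b c * swap a c = c3 a b c := by
  have g1 := hab.symm; have g2 := hac.symm; have g3 := hbc.symm
  apply Equiv.ext; intro t
  rcases eq_or_ne t a with rfl|ha
  · simp_all [c3, mul_apply, swap_apply_def]
  rcases eq_or_ne t b with rfl|hb
  · simp_all [c3, mul_apply, swap_apply_def]
  rcases eq_or_ne t c with rfl|hc
  · simp_all [c3, mul_apply, swap_apply_def]
  · simp_all [c3, mul_apply, swap_apply_def]

/-- a permutation fixing everything outside {a,b,c} maps {a,b,c} into itself -/
lemma maps_into {a b c : α} {x : Perm α}
    (hfix : ∀ t, t ≠ a → t ≠ b → t ≠ c → x t = t) {t : α}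
    (ht : t = a ∨ t = b ∨ t = c) : x t = a ∨ x t = b ∨ x t = c := by
  by_contra h
  push_neg at h
  have h2 : x (x t) = x t := hfix _ h.1 h.2.1 h.2.2
  have h3 : x t = t := x.injective h2
  rcases ht with rfl|rfl|rfl
  · exact h.1 h3
  · exact h.2.1 h3
  · exact h.2.2 h3

/-- classification of permutations supported on ≤ 3 points -/
lemma perm3_cases {a b c : α} (hab : a ≠ b) (hac : a ≠ c) (hbc : b ≠ c) (x : Perm α)
    (hfix : ∀ t, t ≠ a → t ≠ b → t ≠ c → x t = t) :
    x = 1 ∨ x = swap a b ∨ x = swap a c ∨ x = swap b c ∨ x = c3 a b c ∨ x = c3 a c b := by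
  have g1 := hab.symm; have g2 := hac.symm; have g3 := hbc.symm
  have ha := maps_into hfix (Or.inl rfl)
  have hb := maps_into hfix (Or.inr (Or.inl rfl))
  have hc := maps_into hfix (Or.inr (Or.inr rfl))
  have ext6 : ∀ (y : Perm α), (∀ t, t ≠ a → t ≠ b → t ≠ c → y t = t) →
      x a = y a → x b = y b → x c = y c → x = y := by
    intro y hyfix h1 h2 h3
    apply Equiv.ext; intro t
    rcases eq_or_ne t a with rfl|hta; · exact h1
    rcases eq_or_ne t b with rfl|htb; · exact h2
    rcases eq_or_ne t c with rfl|htc; · exact h3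
    rw [hfix t hta htb htc, hyfix t hta htb htc]
  have inj := x.injective
  rcases ha with ha|ha|ha
  · rcases hb with hb|hb|hb
    · exact absurd (inj (ha.trans hb.symm)) hab
    · -- x a = a, x b = b ⇒ x c = c, x = 1
      left
      have hcc : x c = c := by
        rcases hc with h|h|h
        · exact absurd (inj (h.trans ha.symm)) g2
        · exact absurd (inj (h.trans hb.symm)) g3
        · exact h
      exact ext6 1 (fun t _ _ _ => rfl) (by simpa using ha) (by simpa using hb)
        (by simpa using hcc)
    · -- x a = a, x b = c ⇒ x c = b : swap b c
      right; right; right; left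
      have hcc : x c = b := by
        rcases hc with h|h|h
        · exact absurd (inj (h.trans ha.symm)) g2
        · exact h
        · exact absurd (inj (hb.trans h.symm)) hbc
      refine ext6 _ (fun t _ htb htc => swap_apply_of_ne_of_ne htb htc) ?_ ?_ ?_
      · rw [ha, swap_apply_of_ne_of_ne hab hac]
      · rw [hb, swap_apply_left]
      · rw [hcc, swap_apply_right]
  · rcases hb with hb|hb|hb
    · -- x a = b, x b = a ⇒ x c = c : swap a b
      right; left
      have hcc : x c = c := by
        rcases hc with h|h|h
        · exact absurd (inj (h.trans hb.symm)) g3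
        · exact absurd (inj (h.trans ha.symm)) g2
        · exact h
      refine ext6 _ (fun t hta htb _ => swap_apply_of_ne_of_ne hta htb) ?_ ?_ ?_
      · rw [ha, swap_apply_left]
      · rw [hb, swap_apply_right]
      · rw [hcc, swap_apply_of_ne_of_ne g2 g3]
    · exact absurd (inj (ha.trans hb.symm)) hab
    · -- x a = b, x b = c ⇒ x c = a : c3 a b c
      right; right; right; right; left
      have hcc : x c = a := by
        rcases hc with h|h|h
        · exact h
        · exact absurd (inj (h.trans ha.symm)) g2
        · exact absurd (inj (hb.trans h.symm)) hbc
      refine ext6 _ (fun t hta htb htc => c3_other hta htb htc) ?_ ?_ ?_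
      · rw [ha, c3_a hab hac]
      · rw [hb, c3_b hac hbc]
      · rw [hcc, c3_c hbc]
  · rcases hb with hb|hb|hb
    · -- x a = c, x b = a ⇒ x c = b : c3 a c b
      right; right; right; right; right
      have hcc : x c = b := by
        rcases hc with h|h|h
        · exact absurd (inj (h.trans hb.symm)) g3
        · exact h
        · exact absurd (inj (ha.trans h.symm)) hac
      refine ext6 _ (fun t hta htb htc => c3_other hta htc htb) ?_ ?_ ?_
      · rw [ha, c3_a hac hab]
      · rw [hb, c3_c g3]
      · rw [hcc, c3_b hab g3]
    · -- x a = c, x b = b ⇒ x c = a : swap a c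
      right; right; left
      have hcc : x c = a := by
        rcases hc with h|h|h
        · exact h
        · exact absurd (inj (h.trans hb.symm)) g3
        · exact absurd (inj (ha.trans h.symm)) hac
      refine ext6 _ (fun t hta _ htc => swap_apply_of_ne_of_ne hta htc) ?_ ?_ ?_
      · rw [ha, swap_apply_left]
      · rw [hb, swap_apply_of_ne_of_ne hab.symm hbc]
      · rw [hcc, swap_apply_right]
    · exact absurd (inj (ha.trans hb.symm)) hab

end Foundations

section Moves
variable {α : Type*} [DecidableEq α] [Fintype α]

/-- subgroup of permutations fixing everything outside {a,b,c} -/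
def subOn (a b c : α) : Subgroup (Perm α) where
  carrier := {x | ∀ t, t ≠ a → t ≠ b → t ≠ c → x t = t}
  one_mem' := fun _ _ _ _ => rfl
  mul_mem' := by
    intro x y hx hy t h1 h2 h3
    simp only [Set.mem_setOf_eq] at hx hy ⊢
    rw [mul_apply, hy t h1 h2 h3, hx t h1 h2 h3]
  inv_mem' := by
    intro x hx t h1 h2 h3
    simp only [Set.mem_setOf_eq] at hx ⊢
    have := hx t h1 h2 h3
    conv_lhs => rw [← this]
    simp

/-- subgroup {1, τ} for an involution τ -/
def pairSub (τ : Perm α) (h : τ * τ = 1) : Subgroup (Perm α) where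
  carrier := {1, τ}
  one_mem' := Or.inl rfl
  mul_mem' := by
    rintro x y (rfl|rfl) (rfl|rfl)
    · simp
    · simp
    · simp
    · simp [h]
  inv_mem' := by
    rintro x (rfl|rfl)
    · simp
    · right; simp [inv_eq_of_mul_eq_one_right h]

/-- subgroup {1, τ, ρ, τρ} for commuting involutions -/
def v4Sub (τ ρ : Perm α) (hτ : τ * τ = 1) (hρ : ρ * ρ = 1) (hc : τ * ρ = ρ * τ) :
    Subgroup (Perm α) where
  carrier := {1, τ, ρ, τ * ρ}
  one_mem' := Or.inl rfl
  mul_mem' := by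
    have e1 : τ * (τ * ρ) = ρ := by rw [← mul_assoc, hτ, one_mul]
    have e2 : ρ * (τ * ρ) = τ := by rw [← mul_assoc, ← hc, mul_assoc, hρ, mul_one]
    have e3 : (τ * ρ) * τ = ρ := by rw [mul_assoc, ← hc, ← mul_assoc, hτ, one_mul]
    have e4 : (τ * ρ) * ρ = τ := by rw [mul_assoc, hρ, mul_one]
    have e5 : (τ * ρ) * (τ * ρ) = 1 := by
      rw [mul_assoc, ← mul_assoc ρ τ ρ, ← hc, mul_assoc, hρ, mul_one, hτ]
    rintro x y (rfl|rfl|rfl|rfl) (rfl|rfl|rfl|rfl)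
    · exact Or.inl (one_mul 1)
    · exact Or.inr (Or.inl (one_mul _))
    · exact Or.inr (Or.inr (Or.inl (one_mul _)))
    · exact Or.inr (Or.inr (Or.inr (one_mul _)))
    · exact Or.inr (Or.inl (mul_one _))
    · exact Or.inl hτ
    · exact Or.inr (Or.inr (Or.inr rfl))
    · exact Or.inr (Or.inr (Or.inl e1))
    · exact Or.inr (Or.inr (Or.inl (mul_one _)))
    · exact Or.inr (Or.inr (Or.inr hc.symm))
    · exact Or.inl hρ
    · exact Or.inr (Or.inl e2)
    · exact Or.inr (Or.inr (Or.inr (mul_one _)))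
    · exact Or.inr (Or.inr (Or.inl e3))
    · exact Or.inr (Or.inl e4)
    · exact Or.inl e5
  inv_mem' := by
    have e5 : (τ * ρ) * (τ * ρ) = 1 := by
      rw [mul_assoc, ← mul_assoc ρ τ ρ, ← hc, mul_assoc, hρ, mul_one, hτ]
    rintro x (rfl|rfl|rfl|rfl)
    · exact Or.inl inv_one
    · exact Or.inr (Or.inl (inv_eq_of_mul_eq_one_right hτ))
    · exact Or.inr (Or.inr (Or.inl (inv_eq_of_mul_eq_one_right hρ)))
    · exact Or.inr (Or.inr (Or.inr (inv_eq_of_mul_eq_one_right e5)))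

variable {H : Subgroup (Perm α)}

lemma mem_subOn {a b c : α} {x : Perm α} :
    x ∈ subOn a b c ↔ ∀ t, t ≠ a → t ≠ b → t ≠ c → x t = t := Iff.rfl

lemma engine (hmod : ∀ y z : Subgroup (Perm α), y ≤ z → (H ⊔ y) ⊓ z = (H ⊓ z) ⊔ y)
    {x τ ρ : Perm α} (hx : x ∈ H) (hρ : ρ = x * τ * x⁻¹) :
    (H ⊓ Subgroup.closure {τ, ρ}) ⊔ Subgroup.closure {τ}
      = Subgroup.closure {τ, ρ} := by
  have h1 : Subgroup.closure {τ} ≤ Subgroup.closure {τ, ρ} :=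
    Subgroup.closure_mono (Set.singleton_subset_iff.2 (Set.mem_insert _ _))
  have h2 : Subgroup.closure {τ, ρ} ≤ H ⊔ Subgroup.closure {τ} := by
    rw [Subgroup.closure_le]
    have hτm : τ ∈ H ⊔ Subgroup.closure {τ} :=
      SetLike.le_def.1 le_sup_right (Subgroup.subset_closure (Set.mem_singleton τ))
    have hxm : x ∈ H ⊔ Subgroup.closure {τ} := SetLike.le_def.1 le_sup_left hx
    rintro g hg
    rcases Set.mem_insert_iff.1 hg with rfl | hg2
    · exact hτm
    · rw [Set.mem_singleton_iff.1 hg2, hρ]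
      exact mul_mem (mul_mem hxm hτm) (inv_mem hxm)
  have h3 := hmod (Subgroup.closure {τ}) (Subgroup.closure {τ, ρ}) h1
  rw [inf_eq_right.2 h2] at h3; exact h3.symm

lemma Smove (hmod : ∀ y z : Subgroup (Perm α), y ≤ z → (H ⊔ y) ⊓ z = (H ⊓ z) ⊔ y)
    {x : Perm α} (hx : x ∈ H) {a b c u v : α}
    (huv : u ≠ v)
    (hτfix : ∀ t, t ≠ a → t ≠ b → t ≠ c → swap u v t = t)
    (hρfix : ∀ t, t ≠ a → t ≠ b → t ≠ c → (x * swap u v * x⁻¹) t = t)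
    (hρτ : x * swap u v * x⁻¹ ≠ swap u v) :
    ∃ w ∈ H, w ≠ 1 ∧ w ≠ swap u v ∧ ∀ t, t ≠ a → t ≠ b → t ≠ c → w t = t := by
  have hτ2 : swap u v * swap u v = 1 := swap_mul_self u v
  have hz_sub : Subgroup.closure {swap u v, x * swap u v * x⁻¹} ≤ subOn a b c := by
    rw [Subgroup.closure_le]
    rintro g hg
    rcases Set.mem_insert_iff.1 hg with rfl | hg2
    · exact hτfix
    · rw [Set.mem_singleton_iff.1 hg2]
      exact hρfix
  by_contra hcon
  push_neg at hcon
  have hHz : H ⊓ Subgroup.closure {swap u v, x * swap u v * x⁻¹} ≤ pairSub _ hτ2 := by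
    rintro w hw
    rw [Subgroup.mem_inf] at hw
    by_cases h1 : w = 1
    · exact Or.inl h1
    by_cases h2 : w = swap u v
    · exact Or.inr h2
    obtain ⟨t, ht1, ht2, ht3, ht4⟩ := hcon w hw.1 h1 h2
    exact absurd (mem_subOn.1 (hz_sub hw.2) t ht1 ht2 ht3) ht4
  have hτpair : Subgroup.closure {swap u v} ≤ pairSub _ hτ2 := by
    rw [Subgroup.closure_le]
    rintro g hg
    exact Or.inr (Set.mem_singleton_iff.1 hg)
  have hle : Subgroup.closure {swap u v, x * swap u v * x⁻¹} ≤ pairSub _ hτ2 := by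
    rw [← engine hmod hx rfl]
    exact sup_le hHz hτpair
  have hρz : x * swap u v * x⁻¹ ∈ Subgroup.closure {swap u v, x * swap u v * x⁻¹} :=
    Subgroup.subset_closure (Set.mem_insert_iff.2 (Or.inr rfl))
  rcases hle hρz with h | h
  · have h1 : swap u v = 1 := by
      have h' : x * swap u v = x := by
        have := mul_inv_eq_one.1 h
        simpa using this
      have := mul_left_cancel (a := x) (b := swap u v) (c := 1) (by rw [mul_one]; exact h')
      exact this
    exact huv (by simpa using swap_eq_one_iff.1 h1)
  · exact hρτ h

lemma Vmove (hmod : ∀ y z : Subgroup (Perm α), y ≤ z → (H ⊔ y) ⊓ z = (H ⊓ z) ⊔ y)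
    {x τ ρ : Perm α} (hx : x ∈ H) (hρdef : ρ = x * τ * x⁻¹) (hτ2 : τ * τ = 1)
    (hc : τ * ρ = ρ * τ)
    (hτ1 : τ ≠ 1) (hρτ : ρ ≠ τ) :
    ρ ∈ H ∨ τ * ρ ∈ H := by
  have hρ2 : ρ * ρ = 1 := by
    have h' : ρ * ρ = x * (τ * τ) * x⁻¹ := by
      rw [hρdef]; group
    rw [h', hτ2, mul_one, mul_inv_cancel]
  have hz_sub : Subgroup.closure {τ, ρ} ≤ v4Sub τ ρ hτ2 hρ2 hc := by
    rw [Subgroup.closure_le]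
    rintro g hg
    rcases Set.mem_insert_iff.1 hg with rfl | hg2
    · exact Or.inr (Or.inl rfl)
    · rw [Set.mem_singleton_iff.1 hg2]
      exact Or.inr (Or.inr (Or.inl rfl))
  by_contra hcon
  push_neg at hcon
  have hHz : H ⊓ Subgroup.closure {τ, ρ} ≤ pairSub τ hτ2 := by
    rintro w hw
    rw [Subgroup.mem_inf] at hw
    rcases hz_sub hw.2 with h | h | h | h
    · exact Or.inl h
    · exact Or.inr h
    · exact absurd (h ▸ hw.1) hcon.1
    · exact absurd (h ▸ hw.1) hcon.2
  have hτpair : Subgroup.closure {τ} ≤ pairSub τ hτ2 := by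
    rw [Subgroup.closure_le]
    rintro g hg
    exact Or.inr (Set.mem_singleton_iff.1 hg)
  have hle : Subgroup.closure {τ, ρ} ≤ pairSub τ hτ2 := by
    rw [← engine hmod hx hρdef]
    exact sup_le hHz hτpair
  have hρz : ρ ∈ Subgroup.closure {τ, ρ} :=
    Subgroup.subset_closure (Set.mem_insert_iff.2 (Or.inr rfl))
  rcases hle hρz with h | h
  · refine hτ1 ?_
    rw [hρdef] at h
    have h' : x * τ = x := by
      have := mul_inv_eq_one.1 h
      simpa using this
    exact mul_left_cancel (a := x) (b := τ) (c := 1) (by rw [mul_one]; exact h')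
  · exact hρτ h
end Moves

section Tri
variable {α : Type*} [DecidableEq α] [Fintype α] (H : Subgroup (Perm α))

/-- H contains a 3-cycle with support {p,q,r} -/
def Tri3 (p q r : α) : Prop := c3 p q r ∈ H ∨ c3 p r q ∈ H

variable {H}

lemma tri3_swap23 {p q r : α} (h : Tri3 H p q r) : Tri3 H p r q := h.symm

lemma tri3_rot {p q r : α} (hpq : p ≠ q) (hpr : p ≠ r) (hqr : q ≠ r)
    (h : Tri3 H p q r) : Tri3 H q r p := by
  rcases h with h | h
  · rw [c3_rot hpq hpr hqr] at h
    exact Or.inl h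
  · rw [c3_rot hpr hpq hqr.symm, c3_rot hqr.symm hpr.symm hpq.symm] at h
    exact Or.inr h

lemma tri3_rot2 {p q r : α} (hpq : p ≠ q) (hpr : p ≠ r) (hqr : q ≠ r)
    (h : Tri3 H p q r) : Tri3 H r p q :=
  tri3_rot hqr hpq.symm hpr.symm (tri3_rot hpq hpr hqr h)

lemma tri3_swap12 {p q r : α} (hpq : p ≠ q) (hpr : p ≠ r) (hqr : q ≠ r)
    (h : Tri3 H p q r) : Tri3 H q p r :=
  tri3_swap23 (tri3_rot hpq hpr hqr h)

lemma tri3_swap13 {p q r : α} (hpq : p ≠ q) (hpr : p ≠ r) (hqr : q ≠ r)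
    (h : Tri3 H p q r) : Tri3 H r q p :=
  tri3_swap23 (tri3_rot2 hpq hpr hqr h)

lemma tri3_conj {m : Perm α} (hm : m ∈ H) {p q r : α} (h : Tri3 H p q r) :
    Tri3 H (m p) (m q) (m r) := by
  rcases h with h | h
  · exact Or.inl (by rw [← conj_c3]; exact mul_mem (mul_mem hm h) (inv_mem hm))
  · exact Or.inr (by rw [← conj_c3]; exact mul_mem (mul_mem hm h) (inv_mem hm))

/-- two 3-cycle-triples sharing two points give the other triples of the 4-set -/
lemma gquad {a b u v : α} (hab : a ≠ b) (hau : a ≠ u) (hav : a ≠ v) (hbu : b ≠ u)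
    (hbv : b ≠ v) (huv : u ≠ v) (h1 : Tri3 H a b u) (h2 : Tri3 H a b v) :
    Tri3 H u v a ∧ Tri3 H u v b := by
  rcases h2 with h2 | h2
  · -- m2 = c3 a b v : a→b, b→v, v→a
    have e1 : Tri3 H (c3 a b v a) (c3 a b v b) (c3 a b v u) := tri3_conj h2 h1
    rw [c3_a hab hav, c3_b hav hbv, c3_other hau.symm hbu.symm huv] at e1
    -- e1 : Tri3 b v u
    have e2 : Tri3 H ((c3 a b v)⁻¹ a) ((c3 a b v)⁻¹ b) ((c3 a b v)⁻¹ u) :=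
      tri3_conj (inv_mem h2) h1
    rw [c3_inv hab hav hbv, c3_a hav hab, c3_c hbv.symm,
      c3_other hau.symm huv hbu.symm] at e2
    -- e2 : Tri3 v a u
    exact ⟨tri3_rot2 hav.symm huv.symm hau e2, tri3_swap13 hbv hbu huv.symm e1⟩
  · -- m2 = c3 a v b : a→v, v→b, b→a
    have e1 : Tri3 H (c3 a v b a) (c3 a v b b) (c3 a v b u) := tri3_conj h2 h1
    rw [c3_a hav hab, c3_c hbv.symm, c3_other hau.symm huv hbu.symm] at e1
    -- e1 : Tri3 v a u
    have e2 : Tri3 H ((c3 a v b)⁻¹ a) ((c3 a v b)⁻¹ b) ((c3 a v b)⁻¹ u) :=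
      tri3_conj (inv_mem h2) h1
    rw [c3_inv hav hab hbv.symm, c3_a hab hav, c3_b hav hbv,
      c3_other hau.symm hbu.symm huv] at e2
    -- e2 : Tri3 b v u
    exact ⟨tri3_rot2 hav.symm huv.symm hau e1, tri3_swap13 hbv hbu huv.symm e2⟩
end Tri

section Step
variable {α : Type*} [DecidableEq α] [Fintype α] {H : Subgroup (Perm α)}

lemma apply_ne {f g : Perm α} {t : α} (h : f t ≠ g t) : f ≠ g :=
  fun he => h (by rw [he])

lemma swap_comm' {a b c d : α} (hac : a ≠ c) (had : a ≠ d) (hbc : b ≠ c) (hbd : b ≠ d) :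
    swap a b * swap c d = swap c d * swap a b := by
  have g1 := hac.symm; have g2 := had.symm; have g3 := hbc.symm; have g4 := hbd.symm
  apply Equiv.ext; intro t
  rcases eq_or_ne t a with rfl|ha
  · simp_all [mul_apply, swap_apply_def]
  rcases eq_or_ne t b with rfl|hb
  · simp_all [mul_apply, swap_apply_def]
  rcases eq_or_ne t c with rfl|hc
  · simp_all [mul_apply, swap_apply_def]
  rcases eq_or_ne t d with rfl|hd
  · simp_all [mul_apply, swap_apply_def]
  · simp_all [mul_apply, swap_apply_def]

lemma disj_sq {a b c d : α} (hac : a ≠ c) (had : a ≠ d) (hbc : b ≠ c) (hbd : b ≠ d) :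
    (swap a b * swap c d) * (swap a b * swap c d) = 1 := by
  calc (swap a b * swap c d) * (swap a b * swap c d)
      = swap a b * (swap c d * swap a b) * swap c d := by group
    _ = swap a b * (swap a b * swap c d) * swap c d := by
        rw [← swap_comm' hac had hbc hbd]
    _ = (swap a b * swap a b) * (swap c d * swap c d) := by group
    _ = 1 := by rw [swap_mul_self, swap_mul_self, one_mul]

lemma conj_mul2 (x s t : Perm α) : x * (s * t) * x⁻¹ = (x * s * x⁻¹) * (x * t * x⁻¹) := by
  group

/-- (p d)(q e) * (q d)(p e) = (p q)(d e) -/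
lemma vprod {p q d e : α} (h1 : p ≠ q) (h2 : p ≠ d) (h3 : p ≠ e) (h4 : q ≠ d)
    (h5 : q ≠ e) (h6 : d ≠ e) :
    (swap p d * swap q e) * (swap q d * swap p e) = swap p q * swap d e := by
  have g1 := h1.symm; have g2 := h2.symm; have g3 := h3.symm
  have g4 := h4.symm; have g5 := h5.symm; have g6 := h6.symm
  apply Equiv.ext; intro t
  rcases eq_or_ne t p with rfl|hp
  · simp_all [mul_apply, swap_apply_def]
  rcases eq_or_ne t q with rfl|hq
  · simp_all [mul_apply, swap_apply_def]
  rcases eq_or_ne t d with rfl|hd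
  · simp_all [mul_apply, swap_apply_def]
  rcases eq_or_ne t e with rfl|he
  · simp_all [mul_apply, swap_apply_def]
  · simp_all [mul_apply, swap_apply_def]

/-- (q d)(p e) * (p d)(q e) = (p q)(d e) -/
lemma vprod' {p q d e : α} (h1 : p ≠ q) (h2 : p ≠ d) (h3 : p ≠ e) (h4 : q ≠ d)
    (h5 : q ≠ e) (h6 : d ≠ e) :
    (swap q d * swap p e) * (swap p d * swap q e) = swap p q * swap d e := by
  have g1 := h1.symm; have g2 := h2.symm; have g3 := h3.symm
  have g4 := h4.symm; have g5 := h5.symm; have g6 := h6.symm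
  apply Equiv.ext; intro t
  rcases eq_or_ne t p with rfl|hp
  · simp_all [mul_apply, swap_apply_def]
  rcases eq_or_ne t q with rfl|hq
  · simp_all [mul_apply, swap_apply_def]
  rcases eq_or_ne t d with rfl|hd
  · simp_all [mul_apply, swap_apply_def]
  rcases eq_or_ne t e with rfl|he
  · simp_all [mul_apply, swap_apply_def]
  · simp_all [mul_apply, swap_apply_def]


/-- finish from a share-2 triple {p,q,d} -/
lemma fin_pq {p q r d : α} (hpq : p ≠ q) (hpr : p ≠ r) (hpd : p ≠ d) (hqr : q ≠ r)
    (hqd : q ≠ d) (hrd : r ≠ d) (hθ : c3 p q r ∈ H) (h : Tri3 H p q d) :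
    Tri3 H p q d ∧ Tri3 H p r d ∧ Tri3 H q r d := by
  obtain ⟨e1, e2⟩ := gquad hpq hpr hpd hqr hqd hrd (Or.inl hθ) h
  -- e1 : Tri3 r d p, e2 : Tri3 r d q
  exact ⟨h, tri3_rot2 hrd hpr.symm hpd.symm e1, tri3_rot2 hrd hqr.symm hqd.symm e2⟩

/-- finish from a share-2 triple {p,r,d} -/
lemma fin_pr {p q r d : α} (hpq : p ≠ q) (hpr : p ≠ r) (hpd : p ≠ d) (hqr : q ≠ r)
    (hqd : q ≠ d) (hrd : r ≠ d) (hθ : c3 p q r ∈ H) (h : Tri3 H p r d) :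
    Tri3 H p q d ∧ Tri3 H p r d ∧ Tri3 H q r d := by
  obtain ⟨e1, e2⟩ := gquad hpr hpq hpd hqr.symm hrd hqd (tri3_swap23 (Or.inl hθ)) h
  -- e1 : Tri3 q d p, e2 : Tri3 q d r
  exact ⟨tri3_rot2 hqd hpq.symm hpd.symm e1, h, tri3_swap23 e2⟩

/-- upgrade from a share-1 triple {r,d,e} -/
lemma up_r {p q r d e : α} (hpq : p ≠ q) (hpr : p ≠ r) (hpd : p ≠ d) (hpe : p ≠ e)
    (hqr : q ≠ r) (hqd : q ≠ d) (hqe : q ≠ e) (hrd : r ≠ d) (hre : r ≠ e) (hde : d ≠ e)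
    (hθ : c3 p q r ∈ H) (h : Tri3 H r d e) :
    Tri3 H p q d ∧ Tri3 H p r d ∧ Tri3 H q r d := by
  have h2 : Tri3 H (c3 p q r r) (c3 p q r d) (c3 p q r e) := tri3_conj hθ h
  rw [c3_c hqr, c3_other hpd.symm hqd.symm hrd.symm,
    c3_other hpe.symm hqe.symm hre.symm] at h2
  -- h2 : Tri3 p d e
  obtain ⟨e1, e2⟩ := gquad hde hrd.symm hpd.symm hre.symm hpe.symm hpr.symm
    (tri3_rot hrd hre hde h) (tri3_rot hpd hpe hde h2)
  -- e1 : Tri3 r p d, e2 : Tri3 r p e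
  exact fin_pr hpq hpr hpd hqr hqd hrd hθ (tri3_swap12 hpr.symm hrd hpd e1)

/-- upgrade from a share-1 triple {q,d,e} -/
lemma up_q {p q r d e : α} (hpq : p ≠ q) (hpr : p ≠ r) (hpd : p ≠ d) (hpe : p ≠ e)
    (hqr : q ≠ r) (hqd : q ≠ d) (hqe : q ≠ e) (hrd : r ≠ d) (hre : r ≠ e) (hde : d ≠ e)
    (hθ : c3 p q r ∈ H) (h : Tri3 H q d e) :
    Tri3 H p q d ∧ Tri3 H p r d ∧ Tri3 H q r d := by
  have h2 : Tri3 H (c3 p q r q) (c3 p q r d) (c3 p q r e) := tri3_conj hθ h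
  rw [c3_b hpr hqr, c3_other hpd.symm hqd.symm hrd.symm,
    c3_other hpe.symm hqe.symm hre.symm] at h2
  exact up_r hpq hpr hpd hpe hqr hqd hqe hrd hre hde hθ h2

/-- the main step: from a 3-cycle on {p,q,r} in H, capture any new point d -/
lemma step_main (hmod : ∀ y z : Subgroup (Perm α), y ≤ z → (H ⊔ y) ⊓ z = (H ⊓ z) ⊔ y)
    {p q r d e : α} (hpq : p ≠ q) (hpr : p ≠ r) (hpd : p ≠ d) (hpe : p ≠ e)
    (hqr : q ≠ r) (hqd : q ≠ d) (hqe : q ≠ e) (hrd : r ≠ d) (hre : r ≠ e) (hde : d ≠ e)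
    (hθ : c3 p q r ∈ H) :
    Tri3 H p q d ∧ Tri3 H p r d ∧ Tri3 H q r d := by
  have hθp : c3 p q r p = q := c3_a hpq hpr
  have hθd : c3 p q r d = d := c3_other hpd.symm hqd.symm hrd.symm
  have hθe : c3 p q r e = e := c3_other hpe.symm hqe.symm hre.symm
  have hconj1 : c3 p q r * swap p d * (c3 p q r)⁻¹ = swap q d := by
    rw [conj_swap, hθp, hθd]
  obtain ⟨w, hwH, hw1, hwτ, hwfix⟩ :=
    Smove hmod hθ (a := p) (b := q) (c := d) (u := p) (v := d) hpd
      (fun t h1 _ h3 => swap_apply_of_ne_of_ne h1 h3)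
      (by rw [hconj1]; exact fun t _ h2 h3 => swap_apply_of_ne_of_ne h2 h3)
      (by
        rw [hconj1]
        refine apply_ne (t := q) ?_
        rw [swap_apply_left, swap_apply_of_ne_of_ne hpq.symm hqd]
        exact hqd.symm)
  rcases perm3_cases hpq hpd hqd w hwfix with h|h|h|h|h|h
  · exact absurd h hw1
  · -- w = swap p q : the hard branch
    rw [h] at hwH
    clear hw1 hwτ hwfix h
    -- Move 2 : Vmove with τ₂ = (p d)(q e)
    have hρ2eq : swap p q * (swap p d * swap q e) * (swap p q)⁻¹
        = swap q d * swap p e := by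
      rw [conj_mul2, conj_swap, conj_swap, swap_apply_left,
        swap_apply_of_ne_of_ne hpd.symm hqd.symm, swap_apply_right,
        swap_apply_of_ne_of_ne hpe.symm hqe.symm]
    have hτ21 : swap p d * swap q e ≠ 1 := by
      refine apply_ne (t := p) ?_
      rw [mul_apply, swap_apply_of_ne_of_ne hpq hpe, swap_apply_left, Perm.one_apply]
      exact hpd.symm
    have hρτ2 : swap p q * (swap p d * swap q e) * (swap p q)⁻¹
        ≠ swap p d * swap q e := by
      rw [hρ2eq]
      refine apply_ne (t := p) ?_
      rw [mul_apply, swap_apply_left, swap_apply_of_ne_of_ne hqe.symm,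
        mul_apply, swap_apply_of_ne_of_ne hpq hpe, swap_apply_left]
      · exact hde.symm
      · exact hde.symm
    have hcomm2 : (swap p d * swap q e) * (swap p q * (swap p d * swap q e) * (swap p q)⁻¹)
        = (swap p q * (swap p d * swap q e) * (swap p q)⁻¹) * (swap p d * swap q e) := by
      rw [hρ2eq, vprod hpq hpd hpe hqd hqe hde, vprod' hpq hpd hpe hqd hqe hde]
    have hτ2sq : (swap p d * swap q e) * (swap p d * swap q e) = 1 :=
      disj_sq hpq hpe hqd.symm hde
    rcases Vmove hmod hwH rfl hτ2sq hcomm2 hτ21 hρτ2 with hv | hv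
    · -- v = (q d)(p e) ∈ H
      rw [hρ2eq] at hv
      have hvp : (swap q d * swap p e) p = e := by
        rw [mul_apply, swap_apply_left, swap_apply_of_ne_of_ne hqe.symm hde.symm]
      have hvq : (swap q d * swap p e) q = d := by
        rw [mul_apply, swap_apply_of_ne_of_ne hpq.symm hqe, swap_apply_left]
      have hvr : (swap q d * swap p e) r = r := by
        rw [mul_apply, swap_apply_of_ne_of_ne hpr.symm hre,
          swap_apply_of_ne_of_ne hqr.symm hrd]
      have hc : c3 e d r ∈ H := by
        have := mul_mem (mul_mem hv hθ) (inv_mem hv)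
        rwa [conj_c3, hvp, hvq, hvr] at this
      exact up_r hpq hpr hpd hpe hqr hqd hqe hrd hre hde hθ
        (tri3_swap13 hde.symm hre.symm hrd.symm (Or.inl hc))
    · -- (p q)(d e) ∈ H
      rw [hρ2eq, vprod hpq hpd hpe hqd hqe hde] at hv
      have hde_mem : swap d e ∈ H := by
        have := mul_mem hwH hv
        rwa [← mul_assoc, swap_mul_self, one_mul] at this
      -- Move 3
      have hx3 : c3 p q r * swap d e ∈ H := mul_mem hθ hde_mem
      have hx3p : (c3 p q r * swap d e) p = q := by
        rw [mul_apply, swap_apply_of_ne_of_ne hpd hpe, hθp]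
      have hx3d : (c3 p q r * swap d e) d = e := by
        rw [mul_apply, swap_apply_left, hθe]
      have hρ3eq : (c3 p q r * swap d e) * swap p d * (c3 p q r * swap d e)⁻¹
          = swap q e := by
        rw [conj_swap, hx3p, hx3d]
      have hcomm3 : swap p d * ((c3 p q r * swap d e) * swap p d * (c3 p q r * swap d e)⁻¹)
          = ((c3 p q r * swap d e) * swap p d * (c3 p q r * swap d e)⁻¹) * swap p d := by
        rw [hρ3eq, swap_comm' hpq hpe hqd.symm hde]
      have hτ31 : swap p d ≠ 1 := by
        refine apply_ne (t := p) ?_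
        rw [swap_apply_left, Perm.one_apply]
        exact hpd.symm
      have hρτ3 : (c3 p q r * swap d e) * swap p d * (c3 p q r * swap d e)⁻¹
          ≠ swap p d := by
        rw [hρ3eq]
        refine apply_ne (t := q) ?_
        rw [swap_apply_left, swap_apply_of_ne_of_ne hpq.symm hqd]
        exact hqe.symm
      rcases Vmove hmod hx3 rfl (swap_mul_self p d) hcomm3 hτ31 hρτ3 with hv3 | hv3
      · -- swap q e ∈ H
        rw [hρ3eq] at hv3
        have hc : c3 d q e ∈ H := by
          rw [← swap_mul_swap_right hqd.symm hde hqe]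
          exact mul_mem hv3 hde_mem
        exact up_q hpq hpr hpd hpe hqr hqd hqe hrd hre hde hθ
          (tri3_swap12 hqd.symm hde hqe (Or.inl hc))
      · -- (p d)(q e) ∈ H
        rw [hρ3eq] at hv3
        have hv2p : (swap p d * swap q e) p = d := by
          rw [mul_apply, swap_apply_of_ne_of_ne hpq hpe, swap_apply_left]
        have hv2q : (swap p d * swap q e) q = e := by
          rw [mul_apply, swap_apply_left, swap_apply_of_ne_of_ne hpe.symm hde.symm]
        have hv2r : (swap p d * swap q e) r = r := by
          rw [mul_apply, swap_apply_of_ne_of_ne hqr.symm hre,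
            swap_apply_of_ne_of_ne hpr.symm hrd]
        have hc : c3 d e r ∈ H := by
          have := mul_mem (mul_mem hv3 hθ) (inv_mem hv3)
          rwa [conj_c3, hv2p, hv2q, hv2r] at this
        exact up_r hpq hpr hpd hpe hqr hqd hqe hrd hre hde hθ
          (tri3_rot2 hde hrd.symm hre.symm (Or.inl hc))
  · exact absurd h hwτ
  · -- w = swap q d
    rw [h] at hwH
    have hc : c3 p d r ∈ H := by
      have := mul_mem (mul_mem hwH hθ) (inv_mem hwH)
      rwa [conj_c3, swap_apply_of_ne_of_ne hpq hpd, swap_apply_left,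
        swap_apply_of_ne_of_ne hqr.symm hrd] at this
    exact fin_pr hpq hpr hpd hqr hqd hrd hθ (tri3_swap23 (Or.inl hc))
  · -- w = c3 p q d
    rw [h] at hwH
    exact fin_pq hpq hpr hpd hqr hqd hrd hθ (Or.inl hwH)
  · -- w = c3 p d q
    rw [h] at hwH
    exact fin_pq hpq hpr hpd hqr hqd hrd hθ (Or.inr hwH)
end Step

section BaseCase
variable {α : Type*} [DecidableEq α] [Fintype α] {H : Subgroup (Perm α)}

/-- H contains some 3-cycle -/
def ExC3 (H : Subgroup (Perm α)) : Prop :=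
  ∃ a b c : α, a ≠ b ∧ a ≠ c ∧ b ≠ c ∧ c3 a b c ∈ H

lemma exists_fresh (s : Finset α) (h : s.card < Fintype.card α) : ∃ e, e ∉ s := by
  by_contra h'
  push_neg at h'
  have hs : s = Finset.univ := Finset.eq_univ_iff_forall.2 h'
  rw [hs, Finset.card_univ] at h
  exact lt_irrefl _ h

lemma fresh4 (hcard : 5 ≤ Fintype.card α) (a b c d : α) :
    ∃ e, e ≠ a ∧ e ≠ b ∧ e ≠ c ∧ e ≠ d := by
  have h4 : ({a, b, c, d} : Finset α).card ≤ 4 := by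
    calc ({a, b, c, d} : Finset α).card ≤ ({b, c, d} : Finset α).card + 1 :=
        Finset.card_insert_le _ _
      _ ≤ (({c, d} : Finset α).card + 1) + 1 :=
        Nat.add_le_add_right (Finset.card_insert_le _ _) 1
      _ ≤ ((({d} : Finset α).card + 1) + 1) + 1 :=
        Nat.add_le_add_right (Nat.add_le_add_right (Finset.card_insert_le _ _) 1) 1
      _ = 4 := by simp
  obtain ⟨e, he⟩ := exists_fresh {a, b, c, d}
    (lt_of_lt_of_le (Nat.lt_succ_of_le h4) hcard)
  simp only [Finset.mem_insert, Finset.mem_singleton, not_or] at he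
  exact ⟨e, he.1, he.2.1, he.2.2.1, he.2.2.2⟩

lemma base_of_two_swaps (hmod : ∀ y z : Subgroup (Perm α), y ≤ z → (H ⊔ y) ⊓ z = (H ⊓ z) ⊔ y)
    (hcard : 5 ≤ Fintype.card α) {a b c d : α}
    (hab : a ≠ b) (hac : a ≠ c) (had : a ≠ d) (hbc : b ≠ c) (hbd : b ≠ d) (hcd : c ≠ d)
    (h1 : swap a b ∈ H) (h2 : swap c d ∈ H) : ExC3 H := by
  have hx : swap a b * swap c d ∈ H := mul_mem h1 h2
  have e1 : (swap a b * swap c d) a = b := by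
    rw [mul_apply, swap_apply_of_ne_of_ne hac had, swap_apply_left]
  have e2 : (swap a b * swap c d) c = d := by
    rw [mul_apply, swap_apply_left, swap_apply_of_ne_of_ne had.symm hbd.symm]
  have hρeq : (swap a b * swap c d) * swap a c * (swap a b * swap c d)⁻¹ = swap b d := by
    rw [conj_swap, e1, e2]
  have hcomm : swap a c * ((swap a b * swap c d) * swap a c * (swap a b * swap c d)⁻¹)
      = ((swap a b * swap c d) * swap a c * (swap a b * swap c d)⁻¹) * swap a c := by
    rw [hρeq, swap_comm' hab had hbc.symm hcd]
  have hτ1 : swap a c ≠ 1 := by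
    refine apply_ne (t := a) ?_
    rw [swap_apply_left, Perm.one_apply]; exact hac.symm
  have hρτ : (swap a b * swap c d) * swap a c * (swap a b * swap c d)⁻¹ ≠ swap a c := by
    rw [hρeq]
    refine apply_ne (t := b) ?_
    rw [swap_apply_left, swap_apply_of_ne_of_ne hab.symm hbc]
    exact hbd.symm
  rcases Vmove hmod hx rfl (swap_mul_self a c) hcomm hτ1 hρτ with hv | hv
  · rw [hρeq] at hv
    exact ⟨a, b, d, hab, had, hbd, mul_mem h1 hv⟩
  · rw [hρeq] at hv
    -- hv : swap a c * swap b d ∈ H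
    obtain ⟨e, hea, heb, hec, hed⟩ := fresh4 hcard a b c d
    have hv2a : (swap a c * swap b d) a = c := by
      rw [mul_apply, swap_apply_of_ne_of_ne hab had, swap_apply_left]
    have hv2e : (swap a c * swap b d) e = e := by
      rw [mul_apply, swap_apply_of_ne_of_ne heb hed, swap_apply_of_ne_of_ne hea hec]
    have hρ2eq : (swap a c * swap b d) * swap a e * (swap a c * swap b d)⁻¹
        = swap c e := by rw [conj_swap, hv2a, hv2e]
    obtain ⟨w, hwH, hw1, hwτ, hwfix⟩ :=
      Smove hmod hv (a := a) (b := c) (c := e) (u := a) (v := e) hea.symm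
        (fun t h1' _ h3 => swap_apply_of_ne_of_ne h1' h3)
        (by rw [hρ2eq]; exact fun t _ h2' h3 => swap_apply_of_ne_of_ne h2' h3)
        (by
          rw [hρ2eq]
          refine apply_ne (t := c) ?_
          rw [swap_apply_left, swap_apply_of_ne_of_ne hac.symm hec.symm]
          exact hec)
    rcases perm3_cases hac hea.symm hec.symm w hwfix with h|h|h|h|h|h
    · exact absurd h hw1
    · -- w = swap a c
      rw [h] at hwH
      refine ⟨a, c, b, hac, hab, hbc.symm, ?_⟩
      rw [← swap_mul_swap_left hab hac hbc]
      exact mul_mem h1 hwH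
    · exact absurd h hwτ
    · -- w = swap c e
      rw [h] at hwH
      refine ⟨c, e, d, hec.symm, hcd, hed, ?_⟩
      rw [← swap_mul_swap_left hcd hec.symm hed.symm]
      exact mul_mem h2 hwH
    · exact ⟨a, c, e, hac, hea.symm, hec.symm, h ▸ hwH⟩
    · exact ⟨a, e, c, hea.symm, hac, hec, h ▸ hwH⟩

lemma base_of_swap (hmod : ∀ y z : Subgroup (Perm α), y ≤ z → (H ⊔ y) ⊓ z = (H ⊓ z) ⊔ y)
    (hcard : 5 ≤ Fintype.card α) {a b : α} (hab : a ≠ b) (h : swap a b ∈ H) : ExC3 H := by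
  obtain ⟨c, hca, hcb, -, -⟩ := fresh4 hcard a b a b
  obtain ⟨d, hda, hdb, hdc, -⟩ := fresh4 hcard a b c c
  have hρeq : swap a b * (swap a c * swap b d) * (swap a b)⁻¹
      = swap b c * swap a d := by
    rw [conj_mul2, conj_swap, conj_swap, swap_apply_left, swap_apply_of_ne_of_ne hca hcb,
      swap_apply_right, swap_apply_of_ne_of_ne hda hdb]
  have hτsq : (swap a c * swap b d) * (swap a c * swap b d) = 1 :=
    disj_sq hab hda.symm hcb hdc.symm
  have hcomm : (swap a c * swap b d) * (swap a b * (swap a c * swap b d) * (swap a b)⁻¹)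
      = (swap a b * (swap a c * swap b d) * (swap a b)⁻¹) * (swap a c * swap b d) := by
    rw [hρeq, vprod hab hca.symm hda.symm hcb.symm hdb.symm hdc.symm,
      vprod' hab hca.symm hda.symm hcb.symm hdb.symm hdc.symm]
  have hτ1 : swap a c * swap b d ≠ 1 := by
    refine apply_ne (t := a) ?_
    rw [mul_apply, swap_apply_of_ne_of_ne hab hda.symm, swap_apply_left, Perm.one_apply]
    exact hca
  have hρτ : swap a b * (swap a c * swap b d) * (swap a b)⁻¹ ≠ swap a c * swap b d := by
    rw [hρeq]
    refine apply_ne (t := c) ?_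
    rw [mul_apply, swap_apply_of_ne_of_ne hca hdc.symm, swap_apply_right,
      mul_apply, swap_apply_of_ne_of_ne hcb hdc.symm, swap_apply_right]
    exact hab.symm
  rcases Vmove hmod h rfl hτsq hcomm hτ1 hρτ with hv | hv
  · -- swap b c * swap a d ∈ H : conjugate swap a b by it
    rw [hρeq] at hv
    have ea : (swap b c * swap a d) a = d := by
      rw [mul_apply, swap_apply_left, swap_apply_of_ne_of_ne hdb hdc]
    have eb : (swap b c * swap a d) b = c := by
      rw [mul_apply, swap_apply_of_ne_of_ne hab.symm hdb.symm, swap_apply_left]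
    have : (swap b c * swap a d) * swap a b * (swap b c * swap a d)⁻¹ = swap d c := by
      rw [conj_swap, ea, eb]
    have hdc_mem : swap d c ∈ H := by
      rw [← this]
      exact mul_mem (mul_mem hv h) (inv_mem hv)
    rw [swap_comm] at hdc_mem
    exact base_of_two_swaps hmod hcard hab hca.symm hda.symm hcb.symm hdb.symm hdc.symm
      h hdc_mem
  · -- swap a b * swap c d ∈ H
    rw [hρeq, vprod hab hca.symm hda.symm hcb.symm hdb.symm hdc.symm] at hv
    have hcd_mem : swap c d ∈ H := by
      have := mul_mem h hv
      rwa [← mul_assoc, swap_mul_self, one_mul] at this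
    exact base_of_two_swaps hmod hcard hab hca.symm hda.symm hcb.symm hdb.symm hdc.symm
      h hcd_mem

lemma base_of_dt (hmod : ∀ y z : Subgroup (Perm α), y ≤ z → (H ⊔ y) ⊓ z = (H ⊓ z) ⊔ y)
    (hcard : 5 ≤ Fintype.card α) {m1 m2 m3 m4 : α}
    (h12 : m1 ≠ m2) (h13 : m1 ≠ m3) (h14 : m1 ≠ m4) (h23 : m2 ≠ m3) (h24 : m2 ≠ m4)
    (h34 : m3 ≠ m4) (h : swap m1 m2 * swap m3 m4 ∈ H) : ExC3 H := by
  obtain ⟨e, he1, he2, he3, he4⟩ := fresh4 hcard m1 m2 m3 m4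
  have e1 : (swap m1 m2 * swap m3 m4) m1 = m2 := by
    rw [mul_apply, swap_apply_of_ne_of_ne h13 h14, swap_apply_left]
  have e2 : (swap m1 m2 * swap m3 m4) e = e := by
    rw [mul_apply, swap_apply_of_ne_of_ne he3 he4, swap_apply_of_ne_of_ne he1 he2]
  have hρeq : (swap m1 m2 * swap m3 m4) * swap m1 e * (swap m1 m2 * swap m3 m4)⁻¹
      = swap m2 e := by rw [conj_swap, e1, e2]
  obtain ⟨w, hwH, hw1, hwτ, hwfix⟩ :=
    Smove hmod h (a := m1) (b := m2) (c := e) (u := m1) (v := e) he1.symm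
      (fun t h1' _ h3 => swap_apply_of_ne_of_ne h1' h3)
      (by rw [hρeq]; exact fun t _ h2' h3 => swap_apply_of_ne_of_ne h2' h3)
      (by
        rw [hρeq]
        refine apply_ne (t := m2) ?_
        rw [swap_apply_left, swap_apply_of_ne_of_ne h12.symm he2.symm]
        exact he2)
  rcases perm3_cases h12 he1.symm he2.symm w hwfix with hc|hc|hc|hc|hc|hc
  · exact absurd hc hw1
  · -- w = swap m1 m2 : then swap m3 m4 ∈ H
    rw [hc] at hwH
    have : swap m3 m4 ∈ H := by
      have := mul_mem hwH h
      rwa [← mul_assoc, swap_mul_self, one_mul] at this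
    exact base_of_swap hmod hcard h34 this
  · exact absurd hc hwτ
  · -- w = swap m2 e
    rw [hc] at hwH
    exact base_of_swap hmod hcard he2.symm hwH
  · exact ⟨m1, m2, e, h12, he1.symm, he2.symm, hc ▸ hwH⟩
  · exact ⟨m1, e, m2, he1.symm, h12, he2, hc ▸ hwH⟩
end BaseCase

section FinalAssembly
variable {α : Type*} [DecidableEq α] [Fintype α] {H : Subgroup (Perm α)}

lemma base_start (hmod : ∀ y z : Subgroup (Perm α), y ≤ z → (H ⊔ y) ⊓ z = (H ⊓ z) ⊔ y)
    (hcard : 5 ≤ Fintype.card α) (hne : H ≠ ⊥) : ExC3 H := by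
  obtain ⟨⟨x, hxH⟩, hx1⟩ := Subgroup.ne_bot_iff_exists_ne_one.1 hne
  have hx1' : x ≠ 1 := by simpa [Subtype.ext_iff] using hx1
  have hminus : ∃ a, x a ≠ a := by
    by_contra hfix
    push_neg at hfix
    exact hx1' (Equiv.ext fun t => by rw [hfix t, Perm.one_apply])
  obtain ⟨a, ha⟩ := hminus
  have hax : a ≠ x a := fun h => ha h.symm
  by_cases hB : x (x a) = a
  · -- x swaps a and x a
    obtain ⟨c, hca, hcb, -, -⟩ := fresh4 hcard a (x a) a (x a)
    by_cases hB1 : x c = c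
    · have hconj : x * swap a c * x⁻¹ = swap (x a) c := by rw [conj_swap, hB1]
      obtain ⟨w, hwH, hw1, hwτ, hwfix⟩ :=
        Smove hmod hxH (a := a) (b := x a) (c := c) (u := a) (v := c) hca.symm
          (fun t h1 _ h3 => swap_apply_of_ne_of_ne h1 h3)
          (by rw [hconj]; exact fun t _ h2 h3 => swap_apply_of_ne_of_ne h2 h3)
          (by
            rw [hconj]
            refine apply_ne (t := x a) ?_
            rw [swap_apply_left, swap_apply_of_ne_of_ne ha hcb.symm]
            exact hcb)
      rcases perm3_cases hax hca.symm hcb.symm w hwfix with hc|hc|hc|hc|hc|hc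
      · exact absurd hc hw1
      · exact base_of_swap hmod hcard hax (hc ▸ hwH)
      · exact absurd hc hwτ
      · exact base_of_swap hmod hcard hcb.symm (hc ▸ hwH)
      · exact ⟨a, x a, c, hax, hca.symm, hcb.symm, hc ▸ hwH⟩
      · exact ⟨a, c, x a, hca.symm, hax, hcb, hc ▸ hwH⟩
    · -- x c ≠ c
      have hcc' : c ≠ x c := fun h => hB1 h.symm
      have hc'a : x c ≠ a := fun h => hcb (x.injective (h.trans hB.symm))
      have hc'b : x c ≠ x a := fun h => hca (x.injective h)
      have hρeq : x * swap a c * x⁻¹ = swap (x a) (x c) := conj_swap x a c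
      have hcomm : swap a c * (x * swap a c * x⁻¹) = (x * swap a c * x⁻¹) * swap a c := by
        rw [hρeq, swap_comm' hax hc'a.symm hcb hcc']
      have hτ1 : swap a c ≠ 1 := by
        refine apply_ne (t := a) ?_
        rw [swap_apply_left, Perm.one_apply]
        exact hca
      have hρτ : x * swap a c * x⁻¹ ≠ swap a c := by
        rw [hρeq]
        refine apply_ne (t := x a) ?_
        rw [swap_apply_left, swap_apply_of_ne_of_ne ha hcb.symm]
        exact hc'b
      rcases Vmove hmod hxH rfl (swap_mul_self a c) hcomm hτ1 hρτ with hv | hv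
      · rw [hρeq] at hv
        exact base_of_swap hmod hcard hc'b.symm hv
      · rw [hρeq] at hv
        exact base_of_dt hmod hcard hca.symm hax hc'a.symm hcb hcc' hc'b.symm hv
  · -- x (x a) ≠ a : three distinct points a, x a, x (x a)
    have hxb : x (x a) ≠ x a := fun h => ha (x.injective h)
    have haxx : a ≠ x (x a) := fun h => hB h.symm
    have hconj : x * swap a (x a) * x⁻¹ = swap (x a) (x (x a)) := conj_swap x a (x a)
    obtain ⟨w, hwH, hw1, hwτ, hwfix⟩ :=
      Smove hmod hxH (a := a) (b := x a) (c := x (x a)) (u := a) (v := x a) hax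
        (fun t h1 h2 _ => swap_apply_of_ne_of_ne h1 h2)
        (by rw [hconj]; exact fun t _ h2 h3 => swap_apply_of_ne_of_ne h2 h3)
        (by
          rw [hconj]
          refine apply_ne (t := x (x a)) ?_
          rw [swap_apply_right, swap_apply_of_ne_of_ne (fun h => hB h) hxb]
          exact hxb.symm)
    rcases perm3_cases hax haxx hxb.symm w hwfix with hc|hc|hc|hc|hc|hc
    · exact absurd hc hw1
    · exact absurd hc hwτ
    · exact base_of_swap hmod hcard haxx (hc ▸ hwH)
    · exact base_of_swap hmod hcard hxb.symm (hc ▸ hwH)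
    · exact ⟨a, x a, x (x a), hax, haxx, hxb.symm, hc ▸ hwH⟩
    · exact ⟨a, x (x a), x a, haxx, hax, hxb, hc ▸ hwH⟩

lemma tri3_all (hmod : ∀ y z : Subgroup (Perm α), y ≤ z → (H ⊔ y) ⊓ z = (H ⊓ z) ⊔ y)
    (hcard : 5 ≤ Fintype.card α) (hbase : ExC3 H) :
    ∀ x y z : α, x ≠ y → x ≠ z → y ≠ z → Tri3 H x y z := by
  obtain ⟨a, b, c, hab, hac, hbc, hθ⟩ := hbase
  have step' : ∀ p q r d : α, p ≠ q → p ≠ r → q ≠ r → d ≠ p → d ≠ q → d ≠ r →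
      Tri3 H p q r → Tri3 H p q d ∧ Tri3 H p r d ∧ Tri3 H q r d := by
    intro p q r d h1 h2 h3 h4 h5 h6 htri
    obtain ⟨e, hep, heq, her, hed⟩ := fresh4 hcard p q r d
    rcases htri with hm | hm
    · exact step_main hmod h1 h2 h4.symm hep.symm h3 h5.symm heq.symm h6.symm her.symm
        hed.symm hm
    · obtain ⟨t1, t2, t3⟩ := step_main hmod h2 h1 h4.symm hep.symm h3.symm h6.symm
        her.symm h5.symm heq.symm hed.symm hm
      exact ⟨t2, t1, tri3_swap12 h3.symm h6.symm h5.symm t3⟩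
  intro x y z hxy hxz hyz
  have T1 : ∃ u v : α, x ≠ u ∧ x ≠ v ∧ u ≠ v ∧ Tri3 H x u v := by
    by_cases h1 : x = a
    · exact ⟨b, c, h1 ▸ hab, h1 ▸ hac, hbc, h1 ▸ Or.inl hθ⟩
    by_cases h2 : x = b
    · refine ⟨a, c, h2 ▸ hab.symm, h2 ▸ hbc, hac, ?_⟩
      subst h2
      exact tri3_swap12 hab hac hbc (Or.inl hθ)
    by_cases h3 : x = c
    · refine ⟨a, b, h3 ▸ hac.symm, h3 ▸ hbc.symm, hab, ?_⟩
      subst h3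
      exact tri3_rot2 hab hac hbc (Or.inl hθ)
    · obtain ⟨t1, -, -⟩ := step' a b c x hab hac hbc h1 h2 h3 (Or.inl hθ)
      exact ⟨a, b, h1, h2, hab, tri3_rot2 hab (Ne.symm h1) (Ne.symm h2) t1⟩
  obtain ⟨u, v, hxu, hxv, huv, T1⟩ := T1
  have T2 : ∃ w, x ≠ w ∧ y ≠ w ∧ Tri3 H x y w := by
    by_cases h1 : y = u
    · subst h1
      exact ⟨v, hxv, huv, T1⟩
    by_cases h2 : y = v
    · subst h2
      exact ⟨u, hxu, Ne.symm huv, tri3_swap23 T1⟩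
    · obtain ⟨t1, -, -⟩ := step' x u v y hxu hxv huv (Ne.symm hxy) h1 h2 T1
      exact ⟨u, hxu, h1, tri3_swap23 t1⟩
  obtain ⟨w, hxw, hyw, T2⟩ := T2
  by_cases h1 : z = w
  · subst h1
    exact T2
  · obtain ⟨t1, -, -⟩ := step' x y w z hxy hxw hyw (Ne.symm hxz) (Ne.symm hyz) h1 T2
    exact t1

lemma isThreeCycle_eq_c3 {σ : Perm α} (h : Equiv.Perm.IsThreeCycle σ) :
    ∃ p q r : α, p ≠ q ∧ p ≠ r ∧ q ≠ r ∧ σ = c3 p q r := by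
  have hcard3 : σ.support.card = 3 := h.card_support
  have hpos : 0 < σ.support.card := by omega
  obtain ⟨p, hp⟩ := Finset.card_pos.1 hpos
  have hq : σ p ∈ σ.support := Equiv.Perm.apply_mem_support.2 hp
  have hr : σ (σ p) ∈ σ.support := Equiv.Perm.apply_mem_support.2 hq
  have hp1 : σ p ≠ p := Equiv.Perm.mem_support.1 hp
  have hq1 : σ (σ p) ≠ σ p := Equiv.Perm.mem_support.1 hq
  have hrp : σ (σ p) ≠ p := by
    intro hcon
    have h3 : σ ^ 3 = 1 := by
      rw [← h.orderOf]
      exact pow_orderOf_eq_one σ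
    have e3 : (σ ^ 3) p = σ (σ (σ p)) := by
      simp [pow_succ, Equiv.Perm.mul_apply]
    have e4 : σ (σ (σ p)) = p := by rw [← e3, h3]; rfl
    rw [hcon] at e4
    exact hp1 e4
  have hsub : ({p, σ p, σ (σ p)} : Finset α) ⊆ σ.support := by
    intro t ht
    simp only [Finset.mem_insert, Finset.mem_singleton] at ht
    rcases ht with rfl | rfl | rfl
    · exact hp
    · exact hq
    · exact hr
  have hcard3' : ({p, σ p, σ (σ p)} : Finset α).card = 3 := by
    rw [Finset.card_insert_of_notMem (by simp [hp1.symm, hrp.symm, Ne]),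
      Finset.card_insert_of_notMem (by simp [hq1.symm, Ne]), Finset.card_singleton]
  have hset : σ.support = {p, σ p, σ (σ p)} :=
    (Finset.eq_of_subset_of_card_le hsub (le_of_eq (hcard3.trans hcard3'.symm))).symm
  have hrr : σ (σ (σ p)) = p := by
    have hmem : σ (σ (σ p)) ∈ σ.support := Equiv.Perm.apply_mem_support.2 hr
    rw [hset] at hmem
    simp only [Finset.mem_insert, Finset.mem_singleton] at hmem
    rcases hmem with h' | h' | h'
    · exact h'
    · exact absurd (σ.injective h') hrp
    · exact absurd h' (Equiv.Perm.mem_support.1 hr)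
  refine ⟨p, σ p, σ (σ p), hp1.symm, hrp.symm, hq1.symm, ?_⟩
  apply Equiv.ext
  intro t
  rcases eq_or_ne t p with rfl | h1
  · rw [c3_a hp1.symm hrp.symm]
  rcases eq_or_ne t (σ p) with rfl | h2
  · rw [c3_b hrp.symm hq1.symm]
  rcases eq_or_ne t (σ (σ p)) with rfl | h3
  · rw [c3_c hq1.symm, hrr]
  · rw [c3_other h1 h2 h3]
    have : t ∉ σ.support := by
      rw [hset]
      simp [h1, h2, h3]
    exact Equiv.Perm.notMem_support.1 this
end FinalAssembly

/-- For `n ≥ 5`, a nontrivial modular element of the subgroup lattice of `Sₙ`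
contains the alternating group `Aₙ`. -/
theorem modular_subgroup_of_Sn_ge_alternating (n : ℕ) (hn : 5 ≤ n)
    (H : Subgroup (Equiv.Perm (Fin n))) (hH : H ≠ ⊥)
    (hmod : ∀ y z : Subgroup (Equiv.Perm (Fin n)), y ≤ z → (H ⊔ y) ⊓ z = (H ⊓ z) ⊔ y) :
    alternatingGroup (Fin n) ≤ H := by
  have hcard : 5 ≤ Fintype.card (Fin n) := by simpa using hn
  have hbase : ExC3 H := base_start hmod hcard hH
  have htri := tri3_all hmod hcard hbase
  rw [← Equiv.Perm.closure_three_cycles_eq_alternating, Subgroup.closure_le]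
  rintro σ hσ
  obtain ⟨p, q, r, hpq, hpr, hqr, hdef⟩ := isThreeCycle_eq_c3 hσ
  rcases htri p q r hpq hpr hqr with h | h
  · rw [hdef]
    exact h
  · have hinv : σ⁻¹ ∈ H := by
      rw [hdef, c3_inv hpq hpr hqr]
      exact h
    simpa using inv_mem hinv
end
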